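/- arXiv:1706.00738 — 3 statements merged into one kernel-verified Lean document; each statement's English description precedes it below -/
import Mathlib

section
/- Let α₁, α₂ ≥ 1 and let g(z)=Σ aₙ zⁿ, h(z)=Σ bₙ zⁿ be analytic on the unit disc with Σ |aₙ|²/c_{α₁}(n) < ∞ and Σ |bₙ|²/c_{α₂}(n) < ∞. If f = g·h with Taylor coefficients dₙ, then (Σ |dₙ|²/c_{α₁+α₂}(n))^{1/2} ≤ (Σ |aₙ|²/c_{α₁}(n))^{1/2} · (Σ |bₙ|²/c_{α₂}(n))^{1/2}. -/
noncomputable section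

/-- The `n`-th Taylor coefficient of `(1-z)^{-α}`. -/
def binCoeff (α : ℝ) (n : ℕ) : ℝ := Real.Gamma (n + α) / (Real.Gamma α * n.factorial)

open Finset

lemma binCoeff_pos {α : ℝ} (hα : 0 < α) (n : ℕ) : 0 < binCoeff α n := by
  unfold binCoeff
  have h1 : (0:ℝ) < Real.Gamma (n + α) := Real.Gamma_pos_of_pos (by positivity)
  have h2 : (0:ℝ) < Real.Gamma α := Real.Gamma_pos_of_pos hα
  have h3 : (0:ℝ) < (n.factorial : ℝ) := by exact_mod_cast n.factorial_pos
  positivity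

lemma binCoeff_zero {α : ℝ} (hα : 0 < α) : binCoeff α 0 = 1 := by
  unfold binCoeff
  have h2 : (0:ℝ) < Real.Gamma α := Real.Gamma_pos_of_pos hα
  simp [h2.ne']

lemma binCoeff_succ {α : ℝ} (hα : 0 < α) (n : ℕ) :
    binCoeff α (n + 1) * (n + 1) = binCoeff α n * (n + α) := by
  unfold binCoeff
  have h2 : (0:ℝ) < Real.Gamma α := Real.Gamma_pos_of_pos hα
  have h3 : (0:ℝ) < (n.factorial : ℝ) := by exact_mod_cast n.factorial_pos
  have hG : Real.Gamma ((n:ℝ) + 1 + α) = ((n:ℝ) + α) * Real.Gamma ((n:ℝ) + α) := by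
    have := Real.Gamma_add_one (s := (n:ℝ) + α) (by positivity)
    rw [← this]; ring_nf
  have hfac : ((n+1).factorial : ℝ) = (n + 1) * n.factorial := by
    push_cast [Nat.factorial_succ]; ring
  push_cast
  rw [hG, hfac]
  field_simp

lemma binCoeff_succ' {α : ℝ} (hα : 0 < α) (n : ℕ) :
    binCoeff α (n + 1) = binCoeff α n * (n + α) / (n + 1) := by
  have := binCoeff_succ hα n
  field_simp
  linarith [this]

lemma binCoeff_vandermonde {α₁ α₂ : ℝ} (h₁ : 0 < α₁) (h₂ : 0 < α₂) (n : ℕ) :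
    ∑ k ∈ range (n + 1), binCoeff α₁ k * binCoeff α₂ (n - k) = binCoeff (α₁ + α₂) n := by
  induction n with
  | zero => simp [binCoeff_zero h₁, binCoeff_zero h₂, binCoeff_zero (by positivity : (0:ℝ) < α₁ + α₂)]
  | succ n ih =>
    have h12 : (0:ℝ) < α₁ + α₂ := by positivity
    have key : (∑ k ∈ range (n + 2), binCoeff α₁ k * binCoeff α₂ (n + 1 - k)) * ((n:ℝ) + 1)
        = (∑ k ∈ range (n + 1), binCoeff α₁ k * binCoeff α₂ (n - k)) * ((n:ℝ) + α₁ + α₂) := by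
      have split : (∑ k ∈ range (n + 2), binCoeff α₁ k * binCoeff α₂ (n + 1 - k)) * ((n:ℝ) + 1)
          = (∑ k ∈ range (n + 2), ((k:ℝ) * binCoeff α₁ k) * binCoeff α₂ (n + 1 - k))
            + (∑ k ∈ range (n + 2), binCoeff α₁ k * ((((n + 1 - k : ℕ)):ℝ) * binCoeff α₂ (n + 1 - k))) := by
        rw [sum_mul, ← sum_add_distrib]
        refine sum_congr rfl fun k hk => ?_
        have hk' : k ≤ n + 1 := Nat.lt_succ_iff.mp (mem_range.mp hk)
        have : ((n + 1 - k : ℕ) : ℝ) = (n:ℝ) + 1 - k := by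
          push_cast [Nat.cast_sub hk']; ring
        rw [this]; ring
      have T1 : (∑ k ∈ range (n + 2), ((k:ℝ) * binCoeff α₁ k) * binCoeff α₂ (n + 1 - k))
          = ∑ k ∈ range (n + 1), (((k:ℝ) + α₁) * binCoeff α₁ k) * binCoeff α₂ (n - k) := by
        rw [Finset.sum_range_succ' (fun k => ((k:ℝ) * binCoeff α₁ k) * binCoeff α₂ (n + 1 - k)) (n+1)]
        simp only [Nat.cast_zero, zero_mul, add_zero]
        refine sum_congr rfl fun k hk => ?_
        have : ((k:ℝ) + 1) * binCoeff α₁ (k+1) = binCoeff α₁ k * ((k:ℝ) + α₁) := by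
          have := binCoeff_succ h₁ k; linarith [this]
        have hsub : n + 1 - (k + 1) = n - k := by omega
        rw [hsub]
        push_cast
        linear_combination (binCoeff α₂ (n - k)) * this
      have T2 : (∑ k ∈ range (n + 2), binCoeff α₁ k * ((((n + 1 - k : ℕ)):ℝ) * binCoeff α₂ (n + 1 - k)))
          = ∑ k ∈ range (n + 1), binCoeff α₁ k * ((((n - k : ℕ):ℝ) + α₂) * binCoeff α₂ (n - k)) := by
        rw [Finset.sum_range_succ]
        simp only [Nat.sub_self, Nat.cast_zero, zero_mul, mul_zero, add_zero]
        refine sum_congr rfl fun k hk => ?_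
        have hk' : k ≤ n := Nat.lt_succ_iff.mp (mem_range.mp hk)
        have hsub : n + 1 - k = (n - k) + 1 := by omega
        rw [hsub]
        have := binCoeff_succ h₂ (n - k)
        push_cast
        linear_combination (binCoeff α₁ k) * this
      rw [split, T1, T2, ← sum_add_distrib, sum_mul]
      refine sum_congr rfl fun k hk => ?_
      have hk' : k ≤ n := Nat.lt_succ_iff.mp (mem_range.mp hk)
      have : ((n - k : ℕ) : ℝ) = (n:ℝ) - k := by push_cast [Nat.cast_sub hk']; ring
      rw [this]; ring
    have hrec : binCoeff (α₁ + α₂) (n + 1) * ((n:ℝ) + 1) = binCoeff (α₁ + α₂) n * ((n:ℝ) + (α₁ + α₂)) :=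
      binCoeff_succ h12 n
    have hn1 : (0:ℝ) < (n:ℝ) + 1 := by positivity
    have := key
    rw [ih] at this
    have : (∑ k ∈ range (n + 2), binCoeff α₁ k * binCoeff α₂ (n + 1 - k)) * ((n:ℝ) + 1)
        = binCoeff (α₁ + α₂) (n + 1) * ((n:ℝ) + 1) := by
      rw [this, hrec]; ring
    exact mul_right_cancel₀ hn1.ne' this

lemma binCoeff_le_pow {α : ℝ} (hα : 1 ≤ α) (n : ℕ) : binCoeff α n ≤ α ^ n := by
  have hα0 : (0:ℝ) < α := lt_of_lt_of_le one_pos hα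
  induction n with
  | zero => simp [binCoeff_zero hα0]
  | succ n ih =>
    have hpos := binCoeff_pos hα0 n
    have hrec := binCoeff_succ' hα0 n
    rw [hrec, pow_succ]
    have h1 : ((n:ℝ) + α) / ((n:ℝ) + 1) ≤ α := by
      rw [div_le_iff₀ (by positivity)]
      nlinarith [Nat.cast_nonneg (α := ℝ) n]
    calc binCoeff α n * ((n:ℝ) + α) / ((n:ℝ) + 1)
        = binCoeff α n * (((n:ℝ) + α) / ((n:ℝ) + 1)) := by ring
      _ ≤ binCoeff α n * α := by
          exact mul_le_mul_of_nonneg_left h1 hpos.le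
      _ ≤ α ^ n * α := mul_le_mul_of_nonneg_right ih hα0.le


lemma summable_norm_geom {c : ℕ → ℂ} {C s : ℝ} (hC : 0 ≤ C) (hs : 0 ≤ s)
    (hbd : ∀ n, ‖c n‖ ≤ C * s ^ n) {y : ℂ} (hy : s * ‖y‖ < 1) :
    Summable fun n => ‖c n * y ^ n‖ := by
  refine Summable.of_nonneg_of_le (fun n => norm_nonneg _) (fun n => ?_)
    ((summable_geometric_of_lt_one (by positivity) hy).mul_left C)
  have : ‖c n * y ^ n‖ = ‖c n‖ * ‖y‖ ^ n := by
    rw [norm_mul, norm_pow]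
  rw [this, mul_pow, ← mul_assoc]
  exact mul_le_mul_of_nonneg_right (hbd n) (by positivity)

lemma hasFPS_ofScalars {c : ℕ → ℂ} {F : ℂ → ℂ} {C s r : ℝ} (hC : 0 ≤ C) (hs : 0 ≤ s)
    (hr : 0 < r) (hrs : s * r < 1)
    (hbd : ∀ n, ‖c n‖ ≤ C * s ^ n)
    (hF : ∀ z : ℂ, ‖z‖ < r → F z = ∑' n, c n * z ^ n) :
    HasFPowerSeriesOnBall F (FormalMultilinearSeries.ofScalars ℂ c) 0 (ENNReal.ofReal r) := by
  constructor
  · show ENNReal.ofReal r ≤ _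
    have : ENNReal.ofReal r = ((r.toNNReal : NNReal) : ENNReal) := rfl
    rw [this]
    apply FormalMultilinearSeries.le_radius_of_bound _ C
    intro n
    rw [FormalMultilinearSeries.ofScalars_norm, Real.coe_toNNReal _ hr.le]
    calc ‖c n‖ * r ^ n ≤ (C * s ^ n) * r ^ n :=
          mul_le_mul_of_nonneg_right (hbd n) (by positivity)
      _ = C * (s * r) ^ n := by rw [mul_pow]; ring
      _ ≤ C * 1 := mul_le_mul_of_nonneg_left (pow_le_one₀ (by positivity) hrs.le) hC
      _ = C := mul_one C
  · exact ENNReal.ofReal_pos.mpr hr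
  · intro y hy
    rw [mem_emetric_ball_zero_iff, ← ofReal_norm,
      ENNReal.ofReal_lt_ofReal_iff hr] at hy
    have hy' : ‖y‖ < r := by exact hy
    have hys : s * ‖y‖ < 1 :=
      lt_of_le_of_lt (mul_le_mul_of_nonneg_left hy'.le hs) (by rwa [])
    have hsum := (summable_norm_geom hC hs hbd hys).of_norm
    simp only [FormalMultilinearSeries.ofScalars_apply_eq, smul_eq_mul, zero_add]
    rw [hF y hy']
    exact hsum.hasSum

lemma coeff_eq_cauchy {a b d : ℕ → ℂ} {g h f : ℂ → ℂ} {Ca Cb Cd s : ℝ}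
    (hCa : 0 ≤ Ca) (hCb : 0 ≤ Cb) (hCd : 0 ≤ Cd) (hs : 1 ≤ s)
    (hba : ∀ n, ‖a n‖ ≤ Ca * s ^ n)
    (hbb : ∀ n, ‖b n‖ ≤ Cb * s ^ n)
    (hbd : ∀ n, ‖d n‖ ≤ Cd * s ^ n)
    (hg : ∀ z : ℂ, ‖z‖ < 1 → g z = ∑' n, a n * z ^ n)
    (hh : ∀ z : ℂ, ‖z‖ < 1 → h z = ∑' n, b n * z ^ n)
    (hfd : ∀ z : ℂ, ‖z‖ < 1 → f z = ∑' n, d n * z ^ n)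
    (hfgh : ∀ z : ℂ, ‖z‖ < 1 → f z = g z * h z) :
    ∀ n, d n = ∑ k ∈ range (n + 1), a k * b (n - k) := by
  have hs0 : (0:ℝ) < s := lt_of_lt_of_le one_pos hs
  set r : ℝ := (2 * s)⁻¹ with hrdef
  have hr : 0 < r := by positivity
  have hsr : s * r = 2⁻¹ := by rw [hrdef]; field_simp
  have hrs : s * r < 1 := by rw [hsr]; norm_num
  have hr1 : r < 1 := by
    calc r = s⁻¹ * 2⁻¹ := by rw [hrdef]; rw [mul_inv]; ring
    _ ≤ 1 * 2⁻¹ := by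
        apply mul_le_mul_of_nonneg_right _ (by norm_num)
        exact inv_le_one_of_one_le₀ hs
    _ < 1 := by norm_num
  set e : ℕ → ℂ := fun n => ∑ k ∈ range (n + 1), a k * b (n - k) with he
  -- power series for f via d
  have P1 : HasFPowerSeriesOnBall f (FormalMultilinearSeries.ofScalars ℂ d) 0 (ENNReal.ofReal r) :=
    hasFPS_ofScalars hCd hs0.le hr hrs hbd (fun z hz => hfd z (hz.trans hr1))
  -- norm summability helpers
  have hAy : ∀ y : ℂ, ‖y‖ < r → Summable fun n => ‖a n * y ^ n‖ := fun y hy =>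
    summable_norm_geom hCa hs0.le hba
      (lt_of_le_of_lt (mul_le_mul_of_nonneg_left hy.le hs0.le) (by rwa []))
  have hBy : ∀ y : ℂ, ‖y‖ < r → Summable fun n => ‖b n * y ^ n‖ := fun y hy =>
    summable_norm_geom hCb hs0.le hbb
      (lt_of_le_of_lt (mul_le_mul_of_nonneg_left hy.le hs0.le) (by rwa []))
  have hcomb : ∀ (y : ℂ) (n : ℕ),
      (∑ k ∈ range (n + 1), (a k * y ^ k) * (b (n - k) * y ^ (n - k))) = e n * y ^ n := by
    intro y n
    rw [he, sum_mul]
    refine sum_congr rfl fun k hk => ?_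
    have hk' : k ≤ n := Nat.lt_succ_iff.mp (mem_range.mp hk)
    have : y ^ k * y ^ (n - k) = y ^ n := by
      rw [← pow_add, Nat.add_sub_cancel' hk']
    rw [← this]; ring
  have P2 : HasFPowerSeriesOnBall f (FormalMultilinearSeries.ofScalars ℂ e) 0 (ENNReal.ofReal r) := by
    constructor
    · show ENNReal.ofReal r ≤ _
      have hcoe : ENNReal.ofReal r = ((r.toNNReal : NNReal) : ENNReal) := rfl
      rw [hcoe]
      apply FormalMultilinearSeries.le_radius_of_summable
      have habs : ‖((r : ℝ) : ℂ)‖ = r := by rw [Complex.norm_real, Real.norm_of_nonneg hr.le]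
      have hys : s * ‖((r : ℝ) : ℂ)‖ < 1 := by rw [habs]; exact hrs
      have hAr : Summable fun n => ‖a n * ((r:ℝ):ℂ) ^ n‖ :=
        summable_norm_geom hCa hs0.le hba hys
      have hBr : Summable fun n => ‖b n * ((r:ℝ):ℂ) ^ n‖ :=
        summable_norm_geom hCb hs0.le hbb hys
      have H := summable_norm_sum_mul_range_of_summable_norm hAr hBr
      simp only [hcomb ((r:ℝ):ℂ)] at H
      refine H.congr fun n => ?_
      rw [norm_mul, norm_pow, habs,
        FormalMultilinearSeries.ofScalars_norm, Real.coe_toNNReal _ hr.le]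
    · exact ENNReal.ofReal_pos.mpr hr
    · intro y hy
      rw [mem_emetric_ball_zero_iff, ← ofReal_norm,
        ENNReal.ofReal_lt_ofReal_iff hr] at hy
      have hy' : ‖y‖ < r := by exact hy
      have hy1 : ‖y‖ < 1 := hy'.trans hr1
      have H := hasSum_sum_range_mul_of_summable_norm (hAy y hy') (hBy y hy')
      simp only [hcomb y] at H
      rw [← hg y hy1, ← hh y hy1, ← hfgh y hy1] at H
      simpa only [FormalMultilinearSeries.ofScalars_apply_eq, smul_eq_mul, zero_add] using H
  have heq := P1.hasFPowerSeriesAt.eq_formalMultilinearSeries P2.hasFPowerSeriesAt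
  have := FormalMultilinearSeries.ofScalars_series_injective ℂ ℂ heq
  intro n
  exact congrFun this n


lemma sqrt_pow_nat {x : ℝ} (hx : 0 ≤ x) (n : ℕ) :
    Real.sqrt (x ^ n) = Real.sqrt x ^ n := by
  induction n with
  | zero => simp
  | succ n ih => rw [pow_succ, pow_succ, Real.sqrt_mul (by positivity), ih]

lemma abs_le_geom {c : ℕ → ℂ} {α : ℝ} (hα : 1 ≤ α)
    (hsum : Summable fun n => ‖c n‖ ^ 2 / binCoeff α n) (n : ℕ) :
    ‖c n‖ ≤
      Real.sqrt (∑' m, ‖c m‖ ^ 2 / binCoeff α m) * Real.sqrt α ^ n := by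
  have hα0 : (0:ℝ) < α := lt_of_lt_of_le one_pos hα
  have hpos := binCoeff_pos hα0 n
  set T := ∑' m, ‖c m‖ ^ 2 / binCoeff α m with hT
  have hT0 : 0 ≤ T := tsum_nonneg fun m => div_nonneg (by positivity) (binCoeff_pos hα0 m).le
  have hterm : ‖c n‖ ^ 2 / binCoeff α n ≤ T :=
    Summable.le_tsum hsum n fun m _ => div_nonneg (by positivity) (binCoeff_pos hα0 m).le
  have h1 : ‖c n‖ ^ 2 ≤ T * α ^ n := by
    have h2 : ‖c n‖ ^ 2 ≤ T * binCoeff α n := (div_le_iff₀ hpos).mp hterm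
    calc ‖c n‖ ^ 2 ≤ T * binCoeff α n := h2
      _ ≤ T * α ^ n := mul_le_mul_of_nonneg_left (binCoeff_le_pow hα n) hT0
  calc ‖c n‖ = Real.sqrt (‖c n‖ ^ 2) :=
        (Real.sqrt_sq (norm_nonneg _)).symm
    _ ≤ Real.sqrt (T * α ^ n) := Real.sqrt_le_sqrt h1
    _ = Real.sqrt T * Real.sqrt α ^ n := by rw [Real.sqrt_mul hT0, sqrt_pow_nat hα0.le]

theorem logconvexity_coefficients (α₁ α₂ : ℝ) (h₁ : 1 ≤ α₁) (h₂ : 1 ≤ α₂)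
    (a b d : ℕ → ℂ) (g h f : ℂ → ℂ)
    (hg : ∀ z : ℂ, ‖z‖ < 1 → g z = ∑' n, a n * z ^ n)
    (hh : ∀ z : ℂ, ‖z‖ < 1 → h z = ∑' n, b n * z ^ n)
    (hfd : ∀ z : ℂ, ‖z‖ < 1 → f z = ∑' n, d n * z ^ n)
    (hfgh : ∀ z : ℂ, ‖z‖ < 1 → f z = g z * h z)
    (ha : Summable fun n => ‖a n‖ ^ 2 / binCoeff α₁ n)
    (hb : Summable fun n => ‖b n‖ ^ 2 / binCoeff α₂ n) :
    (∑' n, ‖d n‖ ^ 2 / binCoeff (α₁ + α₂) n) ^ ((1 : ℝ) / 2) ≤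
      (∑' n, ‖a n‖ ^ 2 / binCoeff α₁ n) ^ ((1 : ℝ) / 2) *
        (∑' n, ‖b n‖ ^ 2 / binCoeff α₂ n) ^ ((1 : ℝ) / 2) := by
  have h10 : (0:ℝ) < α₁ := lt_of_lt_of_le one_pos h₁
  have h20 : (0:ℝ) < α₂ := lt_of_lt_of_le one_pos h₂
  have h120 : (0:ℝ) < α₁ + α₂ := by positivity
  have h12 : (1:ℝ) ≤ α₁ + α₂ := by linarith
  have hA0 : 0 ≤ ∑' n, ‖a n‖ ^ 2 / binCoeff α₁ n :=
    tsum_nonneg fun m => div_nonneg (by positivity) (binCoeff_pos h10 m).le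
  have hB0 : 0 ≤ ∑' n, ‖b n‖ ^ 2 / binCoeff α₂ n :=
    tsum_nonneg fun m => div_nonneg (by positivity) (binCoeff_pos h20 m).le
  by_cases hd : Summable fun n => ‖d n‖ ^ 2 / binCoeff (α₁ + α₂) n
  · -- summable case
    have hT0 : 0 ≤ ∑' n, ‖d n‖ ^ 2 / binCoeff (α₁ + α₂) n :=
      tsum_nonneg fun m => div_nonneg (by positivity) (binCoeff_pos h120 m).le
    set s : ℝ := Real.sqrt (α₁ + α₂) with hsdef
    have hs1 : (1:ℝ) ≤ s := by
      rw [hsdef, show (1:ℝ) = Real.sqrt 1 from Real.sqrt_one.symm]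
      exact Real.sqrt_le_sqrt (by linarith)
    have hmono₁ : Real.sqrt α₁ ≤ s := Real.sqrt_le_sqrt (by linarith)
    have hmono₂ : Real.sqrt α₂ ≤ s := Real.sqrt_le_sqrt (by linarith)
    have hba : ∀ n, ‖a n‖ ≤
        Real.sqrt (∑' m, ‖a m‖ ^ 2 / binCoeff α₁ m) * s ^ n := fun n =>
      (abs_le_geom h₁ ha n).trans (mul_le_mul_of_nonneg_left
        (pow_le_pow_left₀ (Real.sqrt_nonneg _) hmono₁ n) (Real.sqrt_nonneg _))
    have hbb : ∀ n, ‖b n‖ ≤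
        Real.sqrt (∑' m, ‖b m‖ ^ 2 / binCoeff α₂ m) * s ^ n := fun n =>
      (abs_le_geom h₂ hb n).trans (mul_le_mul_of_nonneg_left
        (pow_le_pow_left₀ (Real.sqrt_nonneg _) hmono₂ n) (Real.sqrt_nonneg _))
    have hbd : ∀ n, ‖d n‖ ≤
        Real.sqrt (∑' m, ‖d m‖ ^ 2 / binCoeff (α₁ + α₂) m) * s ^ n := fun n =>
      abs_le_geom h12 hd n
    have hde := coeff_eq_cauchy (Real.sqrt_nonneg _) (Real.sqrt_nonneg _) (Real.sqrt_nonneg _)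
      hs1 hba hbb hbd hg hh hfd hfgh
    -- per-n Cauchy-Schwarz
    have key : ∀ n, ‖d n‖ ^ 2 / binCoeff (α₁ + α₂) n ≤
        ∑ k ∈ range (n + 1),
          (‖a k‖ ^ 2 / binCoeff α₁ k) *
            (‖b (n - k)‖ ^ 2 / binCoeff α₂ (n - k)) := by
      intro n
      have hc := binCoeff_pos h120 n
      rw [div_le_iff₀ hc]
      have hdn : ‖d n‖ ≤
          ∑ k ∈ range (n + 1), ‖a k‖ * ‖b (n - k)‖ := by
        rw [hde n]
        calc ‖∑ k ∈ range (n + 1), a k * b (n - k)‖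
            ≤ ∑ k ∈ range (n + 1), ‖a k * b (n - k)‖ :=
              norm_sum_le _ _
          _ = ∑ k ∈ range (n + 1), ‖a k‖ * ‖b (n - k)‖ := by
              simp [map_mul]
      have hsq : ‖d n‖ ^ 2 ≤
          (∑ k ∈ range (n + 1), ‖a k‖ * ‖b (n - k)‖) ^ 2 :=
        pow_le_pow_left₀ (norm_nonneg _) hdn 2
      have CS := sum_sq_le_sum_mul_sum_of_sq_eq_mul (range (n + 1))
        (r := fun k => ‖a k‖ * ‖b (n - k)‖)
        (f := fun k => binCoeff α₁ k * binCoeff α₂ (n - k))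
        (g := fun k => (‖a k‖ ^ 2 / binCoeff α₁ k) *
          (‖b (n - k)‖ ^ 2 / binCoeff α₂ (n - k)))
        (fun k _ => mul_nonneg (binCoeff_pos h10 k).le (binCoeff_pos h20 (n - k)).le)
        (fun k _ => mul_nonneg (div_nonneg (by positivity) (binCoeff_pos h10 k).le)
          (div_nonneg (by positivity) (binCoeff_pos h20 (n - k)).le))
        (fun k _ => by
          have e1 := (binCoeff_pos h10 k).ne'
          have e2 := (binCoeff_pos h20 (n - k)).ne'
          field_simp)
      rw [binCoeff_vandermonde h10 h20 n] at CS
      calc ‖d n‖ ^ 2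
          ≤ (∑ k ∈ range (n + 1), ‖a k‖ * ‖b (n - k)‖) ^ 2 := hsq
        _ ≤ binCoeff (α₁ + α₂) n * ∑ k ∈ range (n + 1),
              (‖a k‖ ^ 2 / binCoeff α₁ k) *
                (‖b (n - k)‖ ^ 2 / binCoeff α₂ (n - k)) := CS
        _ = (∑ k ∈ range (n + 1),
              (‖a k‖ ^ 2 / binCoeff α₁ k) *
                (‖b (n - k)‖ ^ 2 / binCoeff α₂ (n - k))) *
              binCoeff (α₁ + α₂) n := by ring
    -- summing up
    have huN : Summable fun k => ‖‖a k‖ ^ 2 / binCoeff α₁ k‖ :=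
      ha.congr fun k =>
        (Real.norm_of_nonneg (div_nonneg (by positivity) (binCoeff_pos h10 k).le)).symm
    have hvN : Summable fun k => ‖‖b k‖ ^ 2 / binCoeff α₂ k‖ :=
      hb.congr fun k =>
        (Real.norm_of_nonneg (div_nonneg (by positivity) (binCoeff_pos h20 k).le)).symm
    have hw : Summable fun n => ∑ k ∈ range (n + 1),
        (‖a k‖ ^ 2 / binCoeff α₁ k) *
          (‖b (n - k)‖ ^ 2 / binCoeff α₂ (n - k)) :=
      (summable_norm_sum_mul_range_of_summable_norm huN hvN).of_norm
    have htsum := tsum_mul_tsum_eq_tsum_sum_range_of_summable_norm huN hvN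
    have main : (∑' n, ‖d n‖ ^ 2 / binCoeff (α₁ + α₂) n) ≤
        (∑' n, ‖a n‖ ^ 2 / binCoeff α₁ n) *
          (∑' n, ‖b n‖ ^ 2 / binCoeff α₂ n) := by
      rw [htsum]
      exact Summable.tsum_le_tsum key hd hw
    rw [← Real.mul_rpow hA0 hB0]
    exact Real.rpow_le_rpow hT0 main (by norm_num)
  · rw [tsum_eq_zero_of_not_summable hd, Real.zero_rpow (by norm_num : (1:ℝ)/2 ≠ 0)]
    exact mul_nonneg (Real.rpow_nonneg hA0 _) (Real.rpow_nonneg hB0 _)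
end
end

section
/- Necessity of the weight exponent: fix α > 1 and 0 < p < ∞ and suppose for some β > 1 and C ≥ 1 the inequality ‖f‖_{A^{pα}_β} ≤ C‖f‖_{H^p} holds for all f ∈ H^p, where the test functions f_r(z) = (1-rz)^{-2/p} (0 < r < 1) are admissible. Then β ≥ α. -/
noncomputable section

open Real MeasureTheory

/-- The `p`-th power mean of `f` on the circle of radius `r`. -/
def hardyMean (p : ℝ) (f : ℂ → ℂ) (r : ℝ) : ℝ :=
  ((2 * π)⁻¹ *
      ∫ θ in (0 : ℝ)..(2 * π),
        ‖f ((r : ℂ) * Complex.exp ((θ : ℂ) * Complex.I))‖ ^ p) ^ (1 / p)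

/-! ### Auxiliary lemmas -/

lemma absSqAux (ρ θ : ℝ) :
    ‖1 - (ρ:ℂ) * Complex.exp ((θ:ℂ) * Complex.I)‖ ^ 2
      = (1-ρ)^2 + 2*ρ*(1 - Real.cos θ) := by
  rw [← Complex.normSq_eq_norm_sq, Complex.normSq_apply]
  simp [Complex.exp_ofReal_mul_I_re, Complex.exp_ofReal_mul_I_im, Complex.sub_re, Complex.sub_im]
  ring_nf
  nlinarith [Real.sin_sq_add_cos_sq θ]

lemma intArctanAux {a : ℝ} (ha : 0 < a) :
    ∫ θ in (0:ℝ)..π, (a^2 + θ^2/π^2)⁻¹ ≤ π^2/(2*a) := by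
  have hπ := Real.pi_pos
  have key : ∫ θ in (0:ℝ)..π, (a^2 + θ^2/π^2)⁻¹
      = (π/a) * Real.arctan (π/(π*a)) - (π/a) * Real.arctan (0/(π*a)) := by
    rw [← intervalIntegral.integral_eq_sub_of_hasDerivAt
      (f := fun θ => (π/a) * Real.arctan (θ/(π*a)))]
    · intro x _
      have h1 : HasDerivAt (fun θ : ℝ => θ/(π*a)) (1/(π*a)) x := by
        simpa using (hasDerivAt_id x).div_const (π*a)
      have h2 := (Real.hasDerivAt_arctan (x/(π*a))).comp x h1
      have h3 := h2.const_mul (π/a)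
      convert h3 using 1
      · rfl
      · rfl
      field_simp
    · apply Continuous.intervalIntegrable
      have : ∀ θ : ℝ, a^2 + θ^2/π^2 ≠ 0 := fun θ => by positivity
      exact continuous_const.add ((continuous_pow 2).div_const _) |>.inv₀ this
  rw [key]
  have h4 : Real.arctan (π/(π*a)) ≤ π/2 := (Real.arctan_lt_pi_div_two _).le
  simp only [zero_div, Real.arctan_zero, mul_zero, sub_zero]
  calc (π/a) * Real.arctan (π/(π*a)) ≤ (π/a) * (π/2) := by
        apply mul_le_mul_of_nonneg_left h4 (by positivity)
    _ = π^2/(2*a) := by field_simp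

lemma thetaIntAux {ρ : ℝ} (h0 : 0 ≤ ρ) (h1 : ρ < 1) :
    ∫ θ in (0:ℝ)..(2*π), ((1-ρ)^2 + 2*ρ*(1 - Real.cos θ))⁻¹ ≤ 10/(1-ρ) := by
  have hπ := Real.pi_pos
  have hρ1 : 0 < 1 - ρ := by linarith
  set h : ℝ → ℝ := fun θ => ((1-ρ)^2 + 2*ρ*(1 - Real.cos θ))⁻¹ with hh
  have hpos : ∀ θ, 0 < (1-ρ)^2 + 2*ρ*(1 - Real.cos θ) := by
    intro θ
    have := Real.cos_le_one θ
    nlinarith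
  have hcont : Continuous h := by
    exact (continuous_const.add (continuous_const.mul
      (continuous_const.sub Real.continuous_cos))).inv₀ fun θ => (hpos θ).ne'
  have hint : ∀ a b : ℝ, IntervalIntegrable h volume a b :=
    fun a b => hcont.intervalIntegrable a b
  have hsplit : ∫ θ in (0:ℝ)..(2*π), h θ = (∫ θ in (0:ℝ)..π, h θ) + ∫ θ in (0:ℝ)..π, h θ := by
    rw [← intervalIntegral.integral_add_adjacent_intervals (hint 0 π) (hint π (2*π))]
    congr 1
    have := intervalIntegral.integral_comp_sub_left h (2*π) (a := 0) (b := π)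
    have heq : ∀ x : ℝ, h (2*π - x) = h x := by
      intro x; simp [hh, Real.cos_sub, Real.cos_two_pi, Real.sin_two_pi]
    rw [show (2*π - π : ℝ) = π by ring, show (2*π - 0 : ℝ) = 2*π by ring] at this
    rw [← this]
    exact intervalIntegral.integral_congr fun x _ => (heq x)
  rcases le_or_gt (1/4 : ℝ) ρ with hρ | hρ
  · have hbd : ∫ θ in (0:ℝ)..π, h θ ≤ ∫ θ in (0:ℝ)..π, ((1-ρ)^2 + θ^2/π^2)⁻¹ := by
      apply intervalIntegral.integral_mono_on hπ.le (hint 0 π)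
      · apply Continuous.intervalIntegrable
        exact (continuous_const.add ((continuous_pow 2).div_const _)).inv₀
          fun θ => (add_pos_of_pos_of_nonneg (pow_pos hρ1 2) (by positivity)).ne'
      · intro x hx
        apply inv_anti₀ (by positivity)
        have hsin : x/π ≤ Real.sin (x/2) := by
          have := Real.mul_le_sin (x := x/2) (by linarith [hx.1]) (by linarith [hx.2])
          calc x/π = 2/π * (x/2) := by ring
          _ ≤ Real.sin (x/2) := this
        have hcos : 1 - Real.cos x = 2 * Real.sin (x/2)^2 := by
          have h2 : Real.cos x = Real.cos (2*(x/2)) := by ring_nf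
          rw [h2, Real.cos_two_mul]
          nlinarith [Real.sin_sq_add_cos_sq (x/2)]
        have hx0 : 0 ≤ x/π := div_nonneg hx.1 hπ.le
        have hsq : (x/π)^2 ≤ Real.sin (x/2)^2 := by
          apply pow_le_pow_left₀ hx0 hsin
        have hxpi : x^2/π^2 = (x/π)^2 := by ring
        nlinarith [sq_nonneg (Real.sin (x/2))]
    have harct := intArctanAux hρ1
    have : ∫ θ in (0:ℝ)..π, h θ ≤ π^2/(2*(1-ρ)) := le_trans hbd harct
    rw [hsplit]
    have hπ2 : π^2 ≤ 10 := by nlinarith [Real.pi_lt_d2]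
    calc (∫ θ in (0:ℝ)..π, h θ) + ∫ θ in (0:ℝ)..π, h θ ≤ π^2/(2*(1-ρ)) + π^2/(2*(1-ρ)) := by
          linarith
      _ = π^2/(1-ρ) := by field_simp; ring
      _ ≤ 10/(1-ρ) := by gcongr
  · have hbd : ∀ x ∈ Set.Icc (0:ℝ) (2*π), h x ≤ ((1-ρ)^2)⁻¹ := by
      intro x _
      apply inv_anti₀ (by positivity)
      have := Real.cos_le_one x
      nlinarith
    have : ∫ θ in (0:ℝ)..(2*π), h θ ≤ ∫ θ in (0:ℝ)..(2*π), ((1-ρ)^2)⁻¹ := by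
      apply intervalIntegral.integral_mono_on (by positivity) (hint 0 (2*π))
        (intervalIntegrable_const) hbd
    rw [intervalIntegral.integral_const] at this
    have h34 : (3/4 : ℝ) < 1 - ρ := by linarith
    calc ∫ θ in (0:ℝ)..(2*π), h θ ≤ (2*π - 0) • ((1-ρ)^2)⁻¹ := this
      _ = 2*π/(1-ρ)^2 := by rw [smul_eq_mul]; ring
      _ ≤ 10/(1-ρ) := by
          rw [div_le_div_iff₀ (by positivity) hρ1]
          have : π < 3.15 := Real.pi_lt_d2
          nlinarith

lemma hardyBoundAux {p r : ℝ} (hp : 0 < p) (hr0 : 0 < r) (hr1 : r < 1)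
    {s : ℝ} (hs0 : 0 < s) (hs1 : s < 1) :
    hardyMean p (fun z => (1 - (r : ℂ) * z) ^ (-(2 / p) : ℂ)) s
      ≤ (10/(2*π))^(1/p) * (1-r)^(-(1/p)) := by
  have hπ := Real.pi_pos
  set ρ := r * s with hρdef
  have hρ0 : 0 ≤ ρ := by positivity
  have hρ1 : ρ < 1 := by nlinarith
  have hr1' : 0 < 1 - r := by linarith
  have hρr : 1 - r ≤ 1 - ρ := by nlinarith
  have habs : ∀ θ : ℝ,
      ‖(1 - (r:ℂ) * ((s:ℂ) * Complex.exp ((θ:ℂ) * Complex.I))) ^ (-(2/p):ℂ)‖ ^ p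
        = ((1-ρ)^2 + 2*ρ*(1 - Real.cos θ))⁻¹ := by
    intro θ
    have hw : (1 - (r:ℂ) * ((s:ℂ) * Complex.exp ((θ:ℂ) * Complex.I)))
        = 1 - (ρ:ℂ) * Complex.exp ((θ:ℂ) * Complex.I) := by push_cast [hρdef]; ring
    rw [hw]
    set w := 1 - (ρ:ℂ) * Complex.exp ((θ:ℂ) * Complex.I) with hwdef
    have habs2 : ‖w‖ ^ 2 = (1-ρ)^2 + 2*ρ*(1 - Real.cos θ) := absSqAux ρ θ
    have hpos : 0 < (1-ρ)^2 + 2*ρ*(1 - Real.cos θ) := by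
      have := Real.cos_le_one θ; nlinarith
    have hwabs : 0 < ‖w‖ := by
      nlinarith [norm_nonneg w]
    have hcast : (-(2/p) : ℂ) = ((-(2/p) : ℝ) : ℂ) := by push_cast; ring
    rw [hcast, Complex.norm_cpow_real]
    rw [← Real.rpow_mul (le_of_lt hwabs)]
    have he : -(2/p)*p = -2 := by field_simp
    rw [he, Real.rpow_neg hwabs.le, Real.rpow_two, habs2]
  unfold hardyMean
  have hint : (∫ θ in (0:ℝ)..(2*π),
      ‖(fun z => (1 - (r:ℂ) * z) ^ (-(2/p):ℂ))
        ((s:ℂ) * Complex.exp ((θ:ℂ) * Complex.I))‖ ^ p)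
      = ∫ θ in (0:ℝ)..(2*π), ((1-ρ)^2 + 2*ρ*(1 - Real.cos θ))⁻¹ := by
    apply intervalIntegral.integral_congr
    intro θ _
    exact habs θ
  rw [hint]
  have h1 : (2*π)⁻¹ * ∫ θ in (0:ℝ)..(2*π), ((1-ρ)^2 + 2*ρ*(1 - Real.cos θ))⁻¹
      ≤ (10/(2*π)) * (1-r)⁻¹ := by
    have h2 := thetaIntAux hρ0 hρ1
    have h3 : (10:ℝ)/(1-ρ) ≤ 10/(1-r) := by
      apply div_le_div_of_nonneg_left (by norm_num) hr1' hρr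
    calc (2*π)⁻¹ * ∫ θ in (0:ℝ)..(2*π), ((1-ρ)^2 + 2*ρ*(1 - Real.cos θ))⁻¹
        ≤ (2*π)⁻¹ * (10/(1-r)) := by
          apply mul_le_mul_of_nonneg_left ((h2.trans h3)) (by positivity)
      _ = (10/(2*π)) * (1-r)⁻¹ := by field_simp
  have hnn : 0 ≤ (2*π)⁻¹ * ∫ θ in (0:ℝ)..(2*π), ((1-ρ)^2 + 2*ρ*(1 - Real.cos θ))⁻¹ := by
    apply mul_nonneg (by positivity)
    apply intervalIntegral.integral_nonneg (by positivity)
    intro x _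
    have hc := Real.cos_le_one x
    have h0' : (0:ℝ) ≤ (1-ρ)^2 + 2*ρ*(1 - Real.cos x) := by nlinarith
    exact inv_nonneg.2 h0'
  calc ((2*π)⁻¹ * ∫ θ in (0:ℝ)..(2*π), ((1-ρ)^2 + 2*ρ*(1 - Real.cos θ))⁻¹) ^ (1/p)
      ≤ ((10/(2*π)) * (1-r)⁻¹) ^ (1/p) := Real.rpow_le_rpow hnn h1 (by positivity)
    _ = (10/(2*π))^(1/p) * (1-r)^(-(1/p)) := by
        rw [Real.mul_rpow (by positivity) (inv_nonneg.2 hr1'.le), ← Real.rpow_neg_one (1-r),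
          ← Real.rpow_mul hr1'.le]
        norm_num

lemma hardyMeanNonnegAux (p : ℝ) (f : ℂ → ℂ) (s : ℝ) : 0 ≤ hardyMean p f s := by
  apply Real.rpow_nonneg
  apply mul_nonneg (by positivity)
  apply intervalIntegral.integral_nonneg (by positivity)
  intro x _
  exact Real.rpow_nonneg (norm_nonneg _) _

/-- Pointwise lower bound for the Bergman-type integrand on a small disc near `1`. -/
lemma pointwiseAux {α p β δ : ℝ} (hα : 1 < α) (hp : 0 < p) (hβ : 1 < β)
    (hδ0 : 0 < δ) (hδ1 : δ < 1) {z : ℂ}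
    (hz : z ∈ Metric.ball (((1 - δ : ℝ)) : ℂ) (δ/4)) :
    (3*δ)^(-(2*α)) * (β-1) *
        ((min ((3/4:ℝ)^(β-2)) ((5/2:ℝ)^(β-2))) * δ^(β-2)) / π
      ≤ ‖(1 - ((1-δ : ℝ):ℂ) * z) ^ (-(2 / p) : ℂ)‖ ^ (p * α) *
          (β - 1) * (1 - ‖z‖ ^ 2) ^ (β - 2) / π := by
  have hπ := Real.pi_pos
  set m := min ((3/4:ℝ)^(β-2)) ((5/2:ℝ)^(β-2)) with hm
  have hm0 : 0 < m := lt_min (Real.rpow_pos_of_pos (by norm_num) _)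
    (Real.rpow_pos_of_pos (by norm_num) _)
  set c : ℂ := ((1 - δ : ℝ) : ℂ) with hc
  have hzc : ‖z - c‖ < δ/4 := by
    rw [Metric.mem_ball, Complex.dist_eq] at hz; exact hz
  have habsc : ‖c‖ = 1 - δ := by
    rw [hc, Complex.norm_real, Real.norm_eq_abs]; rw [abs_of_nonneg (by linarith)]
  have hzub : ‖z‖ ≤ 1 - 3*δ/4 := by
    calc ‖z‖ = ‖c + (z - c)‖ := by ring_nf
      _ ≤ ‖c‖ + ‖z - c‖ := norm_add_le _ _
      _ ≤ (1 - δ) + δ/4 := by rw [habsc]; linarith [hzc.le]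
      _ = 1 - 3*δ/4 := by ring
  have hzlb : 1 - 5*δ/4 ≤ ‖z‖ := by
    have h1 : ‖c‖ ≤ ‖z‖ + ‖c - z‖ := by
      calc ‖c‖ = ‖z + (c - z)‖ := by ring_nf
        _ ≤ _ := norm_add_le _ _
    have h2 : ‖c - z‖ < δ/4 := by
      rwa [← norm_neg, neg_sub] at hzc
    rw [habsc] at h1; linarith
  have hz0 : 0 ≤ ‖z‖ := norm_nonneg _
  have hz1 : ‖z‖ < 1 := by nlinarith
  -- bounds on t = 1 - |z|^2
  set t : ℝ := 1 - ‖z‖ ^ 2 with ht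
  have htlb : 3*δ/4 ≤ t := by nlinarith
  have htub : t ≤ 5*δ/2 := by nlinarith
  have ht0 : 0 < t := by nlinarith
  -- bounds on w = 1 - r z
  set w : ℂ := 1 - c * z with hw
  have hwub : ‖w‖ ≤ 3*δ := by
    have hkey : w = ((2*δ - δ^2 : ℝ) : ℂ) + c * (c - z) := by
      rw [hw, hc]; push_cast; ring
    calc ‖w‖ ≤ ‖((2*δ - δ^2 : ℝ) : ℂ)‖ + ‖c * (c - z)‖ := by
          rw [hkey]; exact norm_add_le _ _
      _ ≤ (2*δ - δ^2) + (1-δ) * (δ/4) := by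
          rw [Complex.norm_real, Real.norm_eq_abs, norm_mul, habsc]
          have h2 : ‖c - z‖ < δ/4 := by
            rwa [← norm_neg, neg_sub] at hzc
          have : |2*δ - δ^2| = 2*δ - δ^2 := abs_of_nonneg (by nlinarith)
          rw [this]
          have : (1-δ) * ‖c - z‖ ≤ (1-δ) * (δ/4) :=
            mul_le_mul_of_nonneg_left h2.le (by linarith)
          linarith
      _ ≤ 3*δ := by nlinarith
  have hwlb : 0 < ‖w‖ := by
    have h1 : ‖c * z‖ ≤ (1-δ) * ‖z‖ := by
      rw [norm_mul, habsc]
    have h2 : 1 - ‖c*z‖ ≤ ‖w‖ := by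
      have h := norm_sub_norm_le (1:ℂ) (c*z)
      simp only [norm_one] at h
      rw [hw]
      simpa using h
    nlinarith
  -- first factor
  have hf1 : (3*δ)^(-(2*α)) ≤ ‖w ^ (-(2/p):ℂ)‖ ^ (p * α) := by
    have hcast : (-(2/p) : ℂ) = ((-(2/p) : ℝ) : ℂ) := by push_cast; ring
    rw [hcast, Complex.norm_cpow_real, ← Real.rpow_mul hwlb.le]
    have he : -(2/p)*(p*α) = -(2*α) := by field_simp
    rw [he]
    exact Real.rpow_le_rpow_of_nonpos hwlb hwub (by nlinarith)
  -- second factor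
  have hf2 : m * δ^(β-2) ≤ t ^ (β-2) := by
    rcases le_or_gt 0 (β-2) with hsg | hsg
    · have h1 : (3*δ/4)^(β-2) ≤ t^(β-2) := Real.rpow_le_rpow (by positivity) htlb hsg
      have h2 : (3*δ/4 : ℝ) = (3/4) * δ := by ring
      rw [h2, Real.mul_rpow (by norm_num) hδ0.le] at h1
      calc m * δ^(β-2) ≤ (3/4:ℝ)^(β-2) * δ^(β-2) := by
            apply mul_le_mul_of_nonneg_right (min_le_left _ _)
              (Real.rpow_nonneg hδ0.le _)
        _ ≤ t^(β-2) := h1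
    · have h1 : (5*δ/2)^(β-2) ≤ t^(β-2) :=
        Real.rpow_le_rpow_of_nonpos ht0 htub hsg.le
      have h2 : (5*δ/2 : ℝ) = (5/2) * δ := by ring
      rw [h2, Real.mul_rpow (by norm_num) hδ0.le] at h1
      calc m * δ^(β-2) ≤ (5/2:ℝ)^(β-2) * δ^(β-2) := by
            apply mul_le_mul_of_nonneg_right (min_le_right _ _)
              (Real.rpow_nonneg hδ0.le _)
        _ ≤ t^(β-2) := h1
  -- combine
  have hβ1 : (0:ℝ) ≤ β - 1 := by linarith
  have hnum : (3*δ)^(-(2*α)) * (β-1) * (m * δ^(β-2))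
      ≤ ‖w ^ (-(2/p):ℂ)‖ ^ (p * α) * (β - 1) * t ^ (β - 2) := by
    have hx0 : (0:ℝ) ≤ (3*δ)^(-(2*α)) := Real.rpow_nonneg (by linarith) _
    have hy0 : (0:ℝ) ≤ m * δ^(β-2) :=
      mul_nonneg hm0.le (Real.rpow_nonneg hδ0.le _)
    calc (3*δ)^(-(2*α)) * (β-1) * (m * δ^(β-2))
        ≤ ‖w ^ (-(2/p):ℂ)‖ ^ (p * α) * (β-1) * (m * δ^(β-2)) := by
          apply mul_le_mul_of_nonneg_right (mul_le_mul_of_nonneg_right hf1 hβ1) hy0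
      _ ≤ ‖w ^ (-(2/p):ℂ)‖ ^ (p * α) * (β-1) * t ^ (β-2) := by
          apply mul_le_mul_of_nonneg_left hf2
          exact mul_nonneg (le_trans hx0 hf1) hβ1
  exact div_le_div_of_nonneg_right hnum hπ.le |>.trans_eq rfl

/-- Necessity of the weight exponent: if `‖f‖_{A^{pα}_β} ≤ C‖f‖_{H^p}` holds, in particular
for the test functions `f_r(z) = (1-rz)^{-2/p}` with `0 < r < 1`, then `β ≥ α`. -/
theorem weight_exponent_necessary (α p β C : ℝ) (hα : 1 < α) (hp : 0 < p) (hβ : 1 < β)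
    (hC : 1 ≤ C)
    (hcontr : ∀ r : ℝ, 0 < r → r < 1 →
      (∫⁻ z in Metric.ball (0 : ℂ) 1,
          ENNReal.ofReal (‖(1 - (r : ℂ) * z) ^ (-(2 / p) : ℂ)‖ ^ (p * α) *
            (β - 1) * (1 - ‖z‖ ^ 2) ^ (β - 2) / π)) ^ (1 / (p * α)) ≤
        ENNReal.ofReal (C * ⨆ s : Set.Ioo (0 : ℝ) 1,
          hardyMean p (fun z => (1 - (r : ℂ) * z) ^ (-(2 / p) : ℂ)) s)) :
    α ≤ β := by
  by_contra hcon
  push_neg at hcon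
  have hπ := Real.pi_pos
  set m := min ((3/4:ℝ)^(β-2)) ((5/2:ℝ)^(β-2)) with hm
  have hm0 : 0 < m := lt_min (Real.rpow_pos_of_pos (by norm_num) _)
    (Real.rpow_pos_of_pos (by norm_num) _)
  set K : ℝ := (10/(2*π))^(1/p) with hK
  have hK0 : 0 < K := Real.rpow_pos_of_pos (by positivity) _
  set A : ℝ := ((3:ℝ)^(-(2*α)) * (β-1) * m / 16) ^ (1/(p*α)) with hA
  have hc₀ : 0 < (3:ℝ)^(-(2*α)) * (β-1) * m / 16 := by
    have := Real.rpow_pos_of_pos (show (0:ℝ) < 3 by norm_num) (-(2*α))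
    have hβ1 : (0:ℝ) < β - 1 := by linarith
    positivity
  have hA0 : 0 < A := Real.rpow_pos_of_pos hc₀ _
  set B : ℝ := C * K with hB
  have hB0 : 0 < B := by positivity
  set t : ℝ := (α - β)/(p*α) with htdef
  have ht0 : 0 < t := by
    apply div_pos (by linarith) (by positivity)
  -- main estimate: for all δ ∈ (0,1), A ≤ B * δ ^ t
  have main : ∀ δ : ℝ, 0 < δ → δ < 1 → A ≤ B * δ ^ t := by
    intro δ hδ0 hδ1
    set r : ℝ := 1 - δ with hr
    have hr0 : 0 < r := by rw [hr]; linarith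
    have hr1 : r < 1 := by rw [hr]; linarith
    have hcontr' := hcontr r hr0 hr1
    -- the region
    set S := Metric.ball (((1 - δ : ℝ)) : ℂ) (δ/4) with hS
    have hSsub : S ⊆ Metric.ball (0 : ℂ) 1 := by
      intro z hz
      rw [Metric.mem_ball, Complex.dist_eq, sub_zero]
      have hzc : ‖z - (((1-δ:ℝ)):ℂ)‖ < δ/4 := by
        rw [Metric.mem_ball, Complex.dist_eq] at hz; exact hz
      have : ‖z‖ ≤ ‖(((1-δ:ℝ)):ℂ)‖ + ‖z - (((1-δ:ℝ)):ℂ)‖ := by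
        calc ‖z‖ = ‖(((1-δ:ℝ)):ℂ) + (z - (((1-δ:ℝ)):ℂ))‖ := by ring_nf
          _ ≤ _ := norm_add_le _ _
      have habsc : ‖(((1-δ:ℝ)):ℂ)‖ = 1 - δ := by
        rw [Complex.norm_real, Real.norm_eq_abs, abs_of_nonneg (by linarith)]
      rw [habsc] at this
      linarith
    -- lower bound for the lintegral
    set P : ℝ := (3*δ)^(-(2*α)) * (β-1) * (m * δ^(β-2)) / π with hP
    have hP0 : 0 < P := by
      have h3δ := Real.rpow_pos_of_pos (show (0:ℝ) < 3*δ by linarith) (-(2*α))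
      have hδβ := Real.rpow_pos_of_pos hδ0 (β-2)
      have hβ1 : (0:ℝ) < β - 1 := by linarith
      positivity
    have hLB : ENNReal.ofReal (P * ((δ/4)^2 * π)) ≤
        ∫⁻ z in Metric.ball (0 : ℂ) 1,
          ENNReal.ofReal (‖(1 - (r : ℂ) * z) ^ (-(2 / p) : ℂ)‖ ^ (p * α) *
            (β - 1) * (1 - ‖z‖ ^ 2) ^ (β - 2) / π) := by
      have hvol : volume S = ENNReal.ofReal ((δ/4)^2 * π) := by
        rw [hS, Complex.volume_ball, ENNReal.ofReal_mul (by positivity),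
          ENNReal.ofReal_pow (by positivity), ← NNReal.coe_real_pi,
          ENNReal.ofReal_coe_nnreal]
      calc ENNReal.ofReal (P * ((δ/4)^2 * π))
          = ENNReal.ofReal P * ENNReal.ofReal ((δ/4)^2 * π) :=
            ENNReal.ofReal_mul hP0.le
        _ = ENNReal.ofReal P * volume S := by rw [hvol]
        _ = ∫⁻ _ in S, ENNReal.ofReal P := (setLIntegral_const _ _).symm
        _ ≤ ∫⁻ z in S,
              ENNReal.ofReal (‖(1 - (r : ℂ) * z) ^ (-(2 / p) : ℂ)‖ ^ (p * α) *
                (β - 1) * (1 - ‖z‖ ^ 2) ^ (β - 2) / π) := by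
            apply setLIntegral_mono' Metric.isOpen_ball.measurableSet
            intro z hz
            apply ENNReal.ofReal_le_ofReal
            have := pointwiseAux hα hp hβ hδ0 hδ1 (z := z) hz
            rw [hP, hr]
            exact this
        _ ≤ _ := lintegral_mono_set hSsub
    -- upper bound for the sup
    have hsup : (⨆ s : Set.Ioo (0 : ℝ) 1,
        hardyMean p (fun z => (1 - (r : ℂ) * z) ^ (-(2 / p) : ℂ)) s) ≤ K * δ^(-(1/p)) := by
      haveI : Nonempty (Set.Ioo (0:ℝ) 1) := Set.nonempty_Ioo_subtype (by norm_num)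
      apply ciSup_le
      intro s
      have := hardyBoundAux hp hr0 hr1 s.2.1 s.2.2
      rw [show (1 - r : ℝ) = δ by rw [hr]; ring] at this
      exact this
    have hsup0 : 0 ≤ (⨆ s : Set.Ioo (0 : ℝ) 1,
        hardyMean p (fun z => (1 - (r : ℂ) * z) ^ (-(2 / p) : ℂ)) s) :=
      Real.iSup_nonneg fun s => hardyMeanNonnegAux _ _ _
    -- combine to a real inequality
    have hreal : (P * ((δ/4)^2 * π)) ^ (1/(p*α)) ≤ B * δ^(-(1/p)) := by
      have h1 : ENNReal.ofReal ((P * ((δ/4)^2 * π)) ^ (1/(p*α))) ≤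
          ENNReal.ofReal (C * ⨆ s : Set.Ioo (0 : ℝ) 1,
            hardyMean p (fun z => (1 - (r : ℂ) * z) ^ (-(2 / p) : ℂ)) s) := by
        calc ENNReal.ofReal ((P * ((δ/4)^2 * π)) ^ (1/(p*α)))
            = (ENNReal.ofReal (P * ((δ/4)^2 * π))) ^ (1/(p*α)) :=
              (ENNReal.ofReal_rpow_of_pos (by positivity)).symm
          _ ≤ _ := le_trans (ENNReal.rpow_le_rpow hLB (by positivity)) hcontr'
      have h2 : (P * ((δ/4)^2 * π)) ^ (1/(p*α)) ≤
          C * ⨆ s : Set.Ioo (0 : ℝ) 1,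
            hardyMean p (fun z => (1 - (r : ℂ) * z) ^ (-(2 / p) : ℂ)) s := by
        rw [ENNReal.ofReal_le_ofReal_iff (by positivity)] at h1
        exact h1
      calc (P * ((δ/4)^2 * π)) ^ (1/(p*α)) ≤ C * (K * δ^(-(1/p))) := by
            apply h2.trans
            exact mul_le_mul_of_nonneg_left hsup (by linarith)
        _ = B * δ^(-(1/p)) := by rw [hB]; ring
    -- simplify the left side
    have hsimp : P * ((δ/4)^2 * π) = ((3:ℝ)^(-(2*α)) * (β-1) * m / 16) * δ^(β-2*α) := by
      rw [hP]
      have h3δ : (3*δ:ℝ)^(-(2*α)) = (3:ℝ)^(-(2*α)) * δ^(-(2*α)) :=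
        Real.mul_rpow (by norm_num) hδ0.le
      have hδs : δ^(-(2*α)) * δ^(β-2) * δ^(2:ℝ) = δ^(β-2*α) := by
        rw [← Real.rpow_add hδ0, ← Real.rpow_add hδ0]
        congr 1; ring
      have hδ2 : ((δ/4)^2 : ℝ) = δ^(2:ℝ)/16 := by
        rw [Real.rpow_two]; ring
      have hstep : (3*δ)^(-(2*α)) * (β-1) * (m * δ^(β-2)) / π * ((δ/4)^2 * π)
          = ((3:ℝ)^(-(2*α)) * (β-1) * m / 16) * (δ^(-(2*α)) * δ^(β-2) * δ^(2:ℝ)) := by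
        rw [h3δ, hδ2]
        field_simp
      rw [hstep, hδs]
    -- conclude A ≤ B * δ ^ t
    have e1 : (P * ((δ/4)^2 * π)) ^ (1/(p*α)) = A * δ^((β-2*α)*(1/(p*α))) := by
      rw [hsimp, Real.mul_rpow hc₀.le (Real.rpow_nonneg hδ0.le _),
        ← Real.rpow_mul hδ0.le, hA]
    have e2 : (β-2*α)*(1/(p*α)) = -(1/p) + -t := by
      rw [htdef]
      field_simp
      ring
    have hd : 0 < δ^(-(1/p)) := Real.rpow_pos_of_pos hδ0 _
    have hdt : 0 < δ^(-t) := Real.rpow_pos_of_pos hδ0 _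
    have h4 : A * (δ^(-(1/p)) * δ^(-t)) ≤ B * δ^(-(1/p)) := by
      have := hreal
      rw [e1, e2, Real.rpow_add hδ0] at this
      exact this
    have h5 : A * δ^(-t) ≤ B := by
      have h6 : A * δ^(-t) * δ^(-(1/p)) ≤ B * δ^(-(1/p)) := by
        calc A * δ^(-t) * δ^(-(1/p)) = A * (δ^(-(1/p)) * δ^(-t)) := by ring
          _ ≤ B * δ^(-(1/p)) := h4
      exact le_of_mul_le_mul_right h6 hd
    calc A = A * δ^(-t) * δ^t := by
          rw [mul_assoc, ← Real.rpow_add hδ0]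
          norm_num
      _ ≤ B * δ^t := by
          apply mul_le_mul_of_nonneg_right h5 (Real.rpow_nonneg hδ0.le _)
  -- choose δ small to contradict
  set δ₀ : ℝ := min (1/2) ((A/(2*B))^(1/t)) with hδ₀
  have hAB : 0 < A/(2*B) := by positivity
  have hδ₀0 : 0 < δ₀ := lt_min (by norm_num) (Real.rpow_pos_of_pos hAB _)
  have hδ₀1 : δ₀ < 1 := lt_of_le_of_lt (min_le_left _ _) (by norm_num)
  have h1 := main δ₀ hδ₀0 hδ₀1
  have h2 : δ₀ ^ t ≤ A/(2*B) := by
    calc δ₀ ^ t ≤ ((A/(2*B))^(1/t)) ^ t :=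
          Real.rpow_le_rpow hδ₀0.le (min_le_right _ _) ht0.le
      _ = A/(2*B) := by
          rw [← Real.rpow_mul hAB.le]
          rw [one_div, inv_mul_cancel₀ ht0.ne', Real.rpow_one]
  have h3 : B * δ₀ ^ t ≤ A/2 := by
    calc B * δ₀ ^ t ≤ B * (A/(2*B)) := mul_le_mul_of_nonneg_left h2 hB0.le
      _ = A/2 := by field_simp
  linarith

end
end

section
/- For all real α ≥ 2, (α-1)/((⌊α⌋-1)^{1-{α}} ⌊α⌋^{{α}}) ≤ 2/(e·log 2), where {α} is the fractional part of α. -/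
noncomputable section

theorem interpolation_constant_le (α : ℝ) (hα : 2 ≤ α) :
    (α - 1) / (((⌊α⌋ : ℝ) - 1) ^ (1 - Int.fract α) * (⌊α⌋ : ℝ) ^ Int.fract α) ≤
      2 / (Real.exp 1 * Real.log 2) := by
  have hfloor : (2:ℤ) ≤ ⌊α⌋ := Int.le_floor.mpr (by exact_mod_cast hα)
  set x : ℝ := ((⌊α⌋ : ℤ) : ℝ) with hxdef
  set t : ℝ := Int.fract α with htdef
  have hx2 : (2:ℝ) ≤ x := by rw [hxdef]; exact_mod_cast hfloor
  have hx1pos : (0:ℝ) < x - 1 := by linarith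
  have hxpos : (0:ℝ) < x := by linarith
  have ht0 : 0 ≤ t := Int.fract_nonneg α
  have ht1 : t < 1 := Int.fract_lt_one α
  have hαxt : α = x + t := by
    have := Int.fract_add_floor α
    rw [hxdef, htdef]; linarith
  set L : ℝ := Real.log x - Real.log (x - 1) with hLdef
  have hLpos : 0 < L := by
    have := Real.log_lt_log hx1pos (by linarith : x - 1 < x)
    linarith
  set u : ℝ := (x - 1) * L with hudef
  have hupos : 0 < u := mul_pos hx1pos hLpos
  have hlog2pos : 0 < Real.log 2 := Real.log_pos one_lt_two
  have hLdiv : Real.log (x / (x - 1)) = L := by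
    rw [Real.log_div (ne_of_gt hxpos) (ne_of_gt hx1pos)]
  -- u < 1
  have hu1 : u < 1 := by
    have hne : x / (x - 1) ≠ 1 := by
      intro h
      rw [div_eq_one_iff_eq (ne_of_gt hx1pos)] at h
      linarith
    have := Real.log_lt_sub_one_of_pos (by positivity : 0 < x / (x - 1)) hne
    rw [hLdiv] at this
    have h2 : x / (x - 1) - 1 = 1 / (x - 1) := by field_simp; ring
    rw [h2] at this
    have := mul_lt_mul_of_pos_left this hx1pos
    calc u = (x - 1) * L := hudef
    _ < (x - 1) * (1 / (x - 1)) := this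
    _ = 1 := by field_simp
  -- log 2 ≤ u, via Bernoulli
  have hlog2u : Real.log 2 ≤ u := by
    set n : ℕ := (⌊α⌋ - 1).toNat with hndef
    have hn : ((n : ℤ) : ℝ) = x - 1 := by
      rw [hndef, Int.toNat_of_nonneg (by omega : (0:ℤ) ≤ ⌊α⌋ - 1)]
      push_cast
      ring
    have hnR : (n : ℝ) = x - 1 := by exact_mod_cast hn
    have hbern : 1 + (n : ℝ) * (1 / (x - 1)) ≤ (1 + 1 / (x - 1)) ^ n :=
      one_add_mul_le_pow (by
        have : (0:ℝ) ≤ 1 / (x - 1) := by positivity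
        linarith) n
    have h1 : (n : ℝ) * (1 / (x - 1)) = 1 := by rw [hnR]; field_simp
    have hbase : 1 + 1 / (x - 1) = x / (x - 1) := by field_simp; ring
    rw [h1, hbase] at hbern
    have h2 : Real.log 2 ≤ Real.log ((x / (x - 1)) ^ n) :=
      Real.log_le_log (by norm_num) (by linarith)
    rw [Real.log_pow, hLdiv] at h2
    rw [hudef, ← hnR]
    exact h2
  -- key estimate on u : exp u * log 2 ≤ 2 * u
  have hD : Real.exp u * Real.log 2 ≤ 2 * u := by
    set s : ℝ := u - Real.log 2 with hsdef
    have hs0 : 0 ≤ s := by linarith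
    have hs1 : s + Real.log 2 < 1 := by linarith
    have hEexp : Real.exp u = 2 * Real.exp s := by
      rw [show u = Real.log 2 + s by rw [hsdef]; ring, Real.exp_add,
        Real.exp_log (by norm_num : (0:ℝ) < 2)]
    set E : ℝ := Real.exp s with hEdef
    have hEpos : 0 < E := Real.exp_pos s
    have hkey : (1 - s) * E ≤ 1 := by
      have h1 : 1 - s ≤ Real.exp (-s) := by
        have := Real.add_one_le_exp (-s)
        linarith
      have h2 : Real.exp (-s) * E = 1 := by
        rw [hEdef, ← Real.exp_add]
        simp
      nlinarith [mul_le_mul_of_nonneg_right h1 hEpos.le]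
    rw [hEexp]
    have hgoal : Real.log 2 * E ≤ Real.log 2 + s := by
      nlinarith [mul_nonneg hs0 hEpos.le, mul_nonneg hs0 (mul_nonneg hs0 hEpos.le)]
    nlinarith [hgoal]
  -- logarithmic form of hD : u + log (log 2) ≤ log 2 + log u
  have hDlog : u + Real.log (Real.log 2) ≤ Real.log 2 + Real.log u := by
    have := Real.log_le_log (by positivity : 0 < Real.exp u * Real.log 2) hD
    rw [Real.log_mul (Real.exp_ne_zero u) (ne_of_gt hlog2pos), Real.log_exp,
      Real.log_mul (by norm_num) (ne_of_gt hupos)] at this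
    exact this
  -- rewrite the denominator
  have hprod : (x - 1) ^ (1 - t) * x ^ t = (x - 1) * Real.exp (t * L) := by
    rw [Real.rpow_def_of_pos hx1pos, Real.rpow_def_of_pos hxpos, ← Real.exp_add,
      show Real.log (x - 1) * (1 - t) + Real.log x * t
        = Real.log (x - 1) + t * L by rw [hLdef]; ring,
      Real.exp_add, Real.exp_log hx1pos]
  -- z such that exp z = 2 (x-1) exp(tL) / (e log 2)
  set z : ℝ := t * L + Real.log 2 + (-1) + (-Real.log (Real.log 2)) + Real.log (x - 1)
    with hzdef
  have hzval : Real.exp z * (Real.exp 1 * Real.log 2) = 2 * ((x - 1) * Real.exp (t * L)) := by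
    rw [hzdef, Real.exp_add, Real.exp_add, Real.exp_add, Real.exp_add,
      Real.exp_log (by norm_num : (0:ℝ) < 2), Real.exp_neg, Real.exp_neg,
      Real.exp_log hlog2pos, Real.exp_log hx1pos]
    field_simp
  -- tangent line bound for exp at -log L
  have htangent : 1 + z + Real.log L ≤ L * Real.exp z := by
    have h1 := Real.add_one_le_exp (z + Real.log L)
    rw [Real.exp_add, Real.exp_log hLpos] at h1
    linarith
  -- main inequality : (α - 1) * L ≤ L * exp z
  have hmain : (α - 1) * L ≤ L * Real.exp z := by
    have h1 : Real.log (x - 1) + Real.log L = Real.log u := by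
      rw [hudef, Real.log_mul (ne_of_gt hx1pos) (ne_of_gt hLpos)]
    have h2 : (α - 1) * L ≤ 1 + z + Real.log L := by
      rw [hαxt, hzdef]
      have : (x + t - 1) * L = t * L + u := by rw [hudef]; ring
      rw [this]
      nlinarith [hDlog, h1]
    linarith
  have hαexp : α - 1 ≤ Real.exp z :=
    le_of_mul_le_mul_left (by linarith : L * (α - 1) ≤ L * Real.exp z) hLpos
  -- finish
  rw [hprod, div_le_div_iff₀ (by positivity) (by positivity)]
  calc (α - 1) * (Real.exp 1 * Real.log 2)
      ≤ Real.exp z * (Real.exp 1 * Real.log 2) :=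
        mul_le_mul_of_nonneg_right hαexp (by positivity)
    _ = 2 * ((x - 1) * Real.exp (t * L)) := hzval
end
end
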